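/- The Laurent series x − k + Σ_{α=1}^{r−1} (v_α/α)·k^{−α} lies in y^r·K[[y]]; that is, x = k − Σ_{α=1}^{r−1} (v_α/α)·k^{−α} + O(x^{−r}). -/

import Mathlib

open scoped BigOperators

section Aux

variable {K : Type*} [Field K]

private lemma shift_coeff_add (m : ℤ) (a : ℕ) (F : PowerSeries K) :
    ((HahnSeries.single m (1:K)) * HahnSeries.ofPowerSeries ℤ K F).coeff (m + a)
      = PowerSeries.coeff a F := by
  rw [add_comm, HahnSeries.coeff_single_mul_add, one_mul, HahnSeries.ofPowerSeries_apply_coeff]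

private lemma shift_coeff (m : ℤ) (a : ℕ) (F : PowerSeries K) (j : ℤ) (hj : j = m + a) :
    ((HahnSeries.single m (1:K)) * HahnSeries.ofPowerSeries ℤ K F).coeff j
      = PowerSeries.coeff a F := by
  rw [hj, shift_coeff_add]

private lemma ofPowerSeries_coeff_neg (F : PowerSeries K) {j : ℤ} (hj : j < 0) :
    (HahnSeries.ofPowerSeries ℤ K F).coeff j = 0 := by
  rw [HahnSeries.ofPowerSeries_apply, HahnSeries.embDomain_notin_range]
  rintro ⟨a, rfl⟩
  simp at hj
  omega

private lemma shift_coeff_neg (m : ℤ) (F : PowerSeries K) {j : ℤ} (hj : j < m) :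
    ((HahnSeries.single m (1:K)) * HahnSeries.ofPowerSeries ℤ K F).coeff j = 0 := by
  have h : j = (j - m) + m := by ring
  rw [h, HahnSeries.coeff_single_mul_add, one_mul,
    ofPowerSeries_coeff_neg F (by omega)]

private lemma prod_coeff_low (h : PowerSeries K) (T : LaurentSeries K) (n : ℤ)
    (hT : ∀ m : ℤ, m < n → T.coeff m = 0) {j : ℤ} (hj : j < n) :
    ((HahnSeries.ofPowerSeries ℤ K h) * T).coeff j = 0 := by
  rw [HahnSeries.coeff_mul]
  apply Finset.sum_eq_zero
  rintro ⟨i1, i2⟩ hi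
  rw [Finset.mem_addAntidiagonal] at hi
  obtain ⟨h1, h2, h3⟩ := hi
  exfalso
  have hi1 : (0:ℤ) ≤ i1 := by
    by_contra hc
    exact h1 (ofPowerSeries_coeff_neg h (by omega))
  have hi2 : n ≤ i2 := by
    by_contra hc
    exact h2 (hT i2 (by omega))
  omega

private lemma conv_coeff (h : PowerSeries K) (T : LaurentSeries K) (n : ℤ)
    (hT : ∀ m : ℤ, m < n → T.coeff m = 0) :
    ((HahnSeries.ofPowerSeries ℤ K h) * T).coeff n
      = PowerSeries.constantCoeff h * T.coeff n := by
  conv_lhs => rw [PowerSeries.eq_X_mul_shift_add_const h]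
  rw [map_add, map_mul, add_mul, HahnSeries.coeff_add, HahnSeries.ofPowerSeries_C,
    HahnSeries.C_apply, HahnSeries.coeff_single_zero_mul, HahnSeries.ofPowerSeries_X, mul_assoc]
  have h2 : ((HahnSeries.single (1:ℤ) (1:K)) *
      ((HahnSeries.ofPowerSeries ℤ K (PowerSeries.mk fun p => PowerSeries.coeff (p+1) h)) * T)).coeff n = 0 := by
    have hh : n = (n - 1) + 1 := by ring
    rw [hh, HahnSeries.coeff_single_mul_add, one_mul,
      prod_coeff_low _ T n hT (by omega)]
  rw [h2, zero_add]

private lemma coeff_sum' (s : Finset ℕ) (f : ℕ → LaurentSeries K) (m : ℤ) :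
    (∑ α ∈ s, f α).coeff m = ∑ α ∈ s, (f α).coeff m :=
  map_sum (HahnSeries.coeff.addMonoidHom m) f s

private lemma core_deriv (w : PowerSeries K) (b j : ℕ) :
    ((b:K)+1) * PowerSeries.coeff j (w^b * PowerSeries.derivative K w)
      = ((j:K)+1) * PowerSeries.coeff (j+1) (w^(b+1)) := by
  have h1 := PowerSeries.coeff_derivative (w^(b+1)) j
  have h2 : PowerSeries.derivative K (w^(b+1)) = (b+1) • (w^b * PowerSeries.derivative K w) := by
    rw [Derivation.leibniz_pow]
    simp [smul_eq_mul]
  rw [h2, map_nsmul, nsmul_eq_mul] at h1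
  push_cast at h1 ⊢
  linear_combination h1

end Aux

/-- In the Laurent series field `K((y))` with `x = y⁻¹`, let `k = y⁻¹·u` be the
`r`-th root of the miniversal deformation `W_s` of the `A_{r-1}`-singularity, and let
`v α` be the coefficient of `y¹` in `k^α`.  Then the Laurent series
`x − k + ∑_{α=1}^{r-1} (v α / α)·k^{−α}` lies in `y^r·K[[y]]`, i.e. all its coefficients in
degrees `< r` vanish. -/
theorem expansion_of_x_in_k
    (K : Type*) [Field K] [CharZero K] (r : ℕ) (hr : 2 ≤ r)
    (s : ℕ → K) (u : PowerSeries K)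
    (hu1 : PowerSeries.constantCoeff u = 1)
    (hur : u ^ r = 1 + ∑ i ∈ Finset.range (r - 1),
        PowerSeries.C (s i) * PowerSeries.X ^ (r - i))
    (k : LaurentSeries K)
    (hk : k = HahnSeries.single (-1 : ℤ) (1 : K) * HahnSeries.ofPowerSeries ℤ K u)
    (v : ℕ → K) (hv : ∀ α : ℕ, v α = (k ^ α).coeff 1) :
    ∀ n : ℤ, n < (r : ℤ) →
      (HahnSeries.single (-1 : ℤ) (1 : K) - k
        + ∑ α ∈ Finset.Icc 1 (r - 1),
            HahnSeries.C (v α / (α : K)) * k ^ (-(α : ℤ))).coeff n = 0 := by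
  classical
  have hu0 : PowerSeries.constantCoeff u ≠ 0 := by rw [hu1]; exact one_ne_zero
  set U := u⁻¹ with hUdef
  have huU : u * U = 1 := PowerSeries.mul_inv_cancel u hu0
  -- normal forms
  have hkpow : ∀ α : ℕ, k ^ α
      = HahnSeries.single (-(α:ℤ)) 1 * HahnSeries.ofPowerSeries ℤ K (u ^ α) := by
    intro α
    rw [hk, mul_pow, HahnSeries.single_pow, one_pow, map_pow]
    congr 1
    simp [nsmul_eq_mul]
  have hkinv : k⁻¹ = HahnSeries.single (1:ℤ) 1 * HahnSeries.ofPowerSeries ℤ K U := by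
    apply inv_eq_of_mul_eq_one_right
    rw [hk, mul_mul_mul_comm, HahnSeries.single_mul_single, ← map_mul, huU, map_one, mul_one]
    norm_num [HahnSeries.single_zero_one]
  have hkinvpow : ∀ α : ℕ, k ^ (-(α:ℤ))
      = HahnSeries.single (α:ℤ) 1 * HahnSeries.ofPowerSeries ℤ K (U ^ α) := by
    intro α
    rw [zpow_neg, zpow_natCast, ← inv_pow, hkinv, mul_pow, HahnSeries.single_pow, one_pow,
      map_pow]
    congr 1
    simp [nsmul_eq_mul]
  have hv' : ∀ α : ℕ, v α = PowerSeries.coeff (α+1) (u^α) := by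
    intro α
    rw [hv, hkpow]
    exact shift_coeff _ _ _ _ (by push_cast; ring)
  -- coefficients of k
  have hkneg : ∀ m : ℤ, m < -1 → k.coeff m = 0 := by
    intro m hm
    rw [hk]
    exact shift_coeff_neg _ _ hm
  have hkc : ∀ (j : ℤ) (a : ℕ), j = -1 + a → k.coeff j = PowerSeries.coeff a u := by
    intro j a hj
    rw [hk]
    exact shift_coeff _ _ _ _ hj
  set T : LaurentSeries K := HahnSeries.single (-1 : ℤ) (1 : K) - k
        + ∑ α ∈ Finset.Icc 1 (r - 1),
            HahnSeries.C (v α / (α : K)) * k ^ (-(α : ℤ)) with hTdef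
  -- coefficient of a sum term below α
  have hterm_neg : ∀ (α : ℕ), ∀ m : ℤ, m < (α:ℤ) →
      (HahnSeries.C (v α / (α:K)) * k ^ (-(α : ℤ))).coeff m = 0 := by
    intro α m hm
    rw [hkinvpow, HahnSeries.C_apply, HahnSeries.coeff_single_zero_mul,
      shift_coeff_neg _ _ hm, mul_zero]
  -- low coefficients of T vanish
  have hlow : ∀ m : ℤ, m < -1 → T.coeff m = 0 := by
    intro m hm
    rw [hTdef, HahnSeries.coeff_add, HahnSeries.coeff_sub, coeff_sum',
      HahnSeries.coeff_single_of_ne (by omega), hkneg m hm]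
    rw [Finset.sum_eq_zero]
    · ring
    intro α hα
    rw [Finset.mem_Icc] at hα
    exact hterm_neg α m (by omega)
  -- coefficient at -1
  have hm1 : T.coeff (-1) = 0 := by
    rw [hTdef, HahnSeries.coeff_add, HahnSeries.coeff_sub, coeff_sum',
      HahnSeries.coeff_single_same, hkc (-1) 0 (by norm_num)]
    rw [Finset.sum_eq_zero]
    · simp [PowerSeries.coeff_zero_eq_constantCoeff, hu1]
    intro α hα
    rw [Finset.mem_Icc] at hα
    exact hterm_neg α _ (by omega)
  -- coeff 1 of u is zero
  have hu1' : PowerSeries.coeff 1 u = 0 := by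
    have h1 : PowerSeries.coeff 1 (u^r) = 0 := by
      rw [hur, map_add, map_sum]
      rw [Finset.sum_eq_zero]
      · simp
      intro i hi
      rw [Finset.mem_range] at hi
      rw [PowerSeries.coeff_C_mul, PowerSeries.coeff_X_pow, if_neg (by omega), mul_zero]
    have hrK : (r:K) ≠ 0 := Nat.cast_ne_zero.mpr (by omega)
    have h2 : ((r-1:ℕ):K) + 1 = (r:K) := by
      push_cast [Nat.cast_sub (by omega : 1 ≤ r)]
      ring
    have h3 := core_deriv u (r-1) 0
    rw [show (r-1)+1 = r by omega] at h3
    rw [h1, mul_zero, h2] at h3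
    have h4 := (mul_eq_zero.mp h3).resolve_left hrK
    rw [PowerSeries.coeff_zero_eq_constantCoeff, map_mul, map_pow, hu1, one_pow, one_mul] at h4
    have h5 := PowerSeries.coeff_derivative u 0
    rw [PowerSeries.coeff_zero_eq_constantCoeff, h4] at h5
    simpa using h5.symm
  -- coefficient at 0
  have h0 : T.coeff 0 = 0 := by
    rw [hTdef, HahnSeries.coeff_add, HahnSeries.coeff_sub, coeff_sum',
      HahnSeries.coeff_single_of_ne (by omega), hkc 0 1 (by norm_num)]
    rw [Finset.sum_eq_zero]
    · simp [hu1']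
    intro α hα
    rw [Finset.mem_Icc] at hα
    exact hterm_neg α _ (by omega)
  -- auxiliary: U^a * u^(a+b) = u^b
  have hUu : ∀ a b : ℕ, U^a * u^(a+b) = u^b := by
    intro a b
    rw [pow_add, ← mul_assoc, ← mul_pow, mul_comm U u, huU, one_pow, one_mul]
  -- main induction
  have key : ∀ j : ℕ, j ≤ r → T.coeff ((j:ℤ) - 1) = 0 := by
    intro j
    induction j using Nat.strong_induction_on with
    | _ j IH =>
      intro hj
      match j with
      | 0 => simpa using hm1
      | 1 => simpa using h0
      | (M+2) =>
        have hz : ((M+2:ℕ):ℤ) - 1 = ((M+1:ℕ):ℤ) := by push_cast; ring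
        rw [hz]
        have hMr : M + 2 ≤ r := hj
        have hprev : ∀ m : ℤ, m < ((M+1:ℕ):ℤ) → T.coeff m = 0 := by
          intro m hm
          rcases lt_or_ge m (-1) with h | h
          · exact hlow m h
          · have hm' : m = (((m+1).toNat : ℕ):ℤ) - 1 := by omega
            rw [hm']
            exact IH (m+1).toNat (by omega) (by omega)
        set du := PowerSeries.derivative K u with hdu
        set g : PowerSeries K := -(u^(M+1)) + PowerSeries.X * (u^M * du) with hgdef
        have hg0 : PowerSeries.constantCoeff g = -1 := by
          rw [hgdef]
          simp [hu1]
        have hM1K : ((M:K)+1) ≠ 0 := by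
          exact_mod_cast (by omega : M+1 ≠ 0)
        have hM2K : ((M:K)+1+1) ≠ 0 := by
          exact_mod_cast (by omega : M+1+1 ≠ 0)
        -- F1
        have F1 : ((M:K)+1) * PowerSeries.coeff (M+2) g
            = PowerSeries.coeff (M+2) (u^(M+1)) := by
          have hc := core_deriv u M (M+1)
          rw [hgdef, map_add, map_neg]
          rw [show M + 2 = (M+1) + 1 by omega, PowerSeries.coeff_succ_X_mul]
          push_cast at hc ⊢
          linear_combination hc
        -- F2
        have F2 : PowerSeries.coeff (M+2) (u * g) = 0 := by
          have hug : u * g = -(u^(M+2)) + PowerSeries.X * (u^(M+1) * du) := by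
            rw [hgdef]; ring
          have hc := core_deriv u (M+1) (M+1)
          rw [hug, map_add, map_neg,
            show M + 2 = (M+1) + 1 by omega, PowerSeries.coeff_succ_X_mul]
          have h5 : PowerSeries.coeff (M+1) (u^(M+1) * du)
              = PowerSeries.coeff (M+1+1) (u^(M+1+1)) := by
            apply mul_left_cancel₀ hM2K
            push_cast at hc ⊢
            linear_combination hc
          rw [h5]
          ring
        -- F3a
        have F3a : ∀ α : ℕ, 1 ≤ α → α ≤ M →
            PowerSeries.coeff (M+1-α) (U^α * g) = 0 := by
          intro α hα1 hαM
          set b := M - α with hb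
          have hbM : α + b = M := by omega
          have hbM1 : α + (b+1) = M+1 := by omega
          have e1 : U^α * u^(M+1) = u^(b+1) := by
            have h := hUu α (b+1); rwa [hbM1] at h
          have e2 : U^α * u^M = u^b := by
            have h := hUu α b; rwa [hbM] at h
          have hUg : U^α * g = -(u^(b+1)) + PowerSeries.X * (u^b * du) := by
            calc U^α * g = -(U^α * u^(M+1)) + PowerSeries.X * ((U^α * u^M) * du) := by
                  rw [hgdef]; ring
              _ = -(u^(b+1)) + PowerSeries.X * (u^b * du) := by rw [e1, e2]
          have hidx : M + 1 - α = b + 1 := by omega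
          rw [hidx, hUg, map_add, map_neg, PowerSeries.coeff_succ_X_mul]
          have hc := core_deriv u b b
          have hbK : ((b:K)+1) ≠ 0 := by exact_mod_cast (by omega : b+1 ≠ 0)
          have h5 : PowerSeries.coeff b (u^b * du)
              = PowerSeries.coeff (b+1) (u^(b+1)) := by
            apply mul_left_cancel₀ hbK
            push_cast at hc ⊢
            linear_combination hc
          rw [h5]
          ring
        -- F3b
        have F3b : PowerSeries.coeff 0 (U^(M+1) * g) = -1 := by
          have e3 : U^(M+1) * u^(M+1) = 1 := by
            rw [← mul_pow, mul_comm U u, huU, one_pow]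
          have e4 : U^(M+1) * u^M = U := by
            have h6 : U^(M+1) * u^M = U * (U^M * u^M) := by ring
            rw [h6, ← mul_pow, mul_comm U u, huU, one_pow, mul_one]
          have hUg : U^(M+1) * g = -1 + PowerSeries.X * (U * du) := by
            calc U^(M+1) * g
                = -(U^(M+1) * u^(M+1)) + PowerSeries.X * ((U^(M+1) * u^M) * du) := by
                  rw [hgdef]; ring
              _ = -1 + PowerSeries.X * (U * du) := by rw [e3, e4]
          rw [hUg]
          simp
        -- two evaluations of ((ofPowerSeries g) * T).coeff (M+1)
        have hconv : ((HahnSeries.ofPowerSeries ℤ K g) * T).coeff ((M+1:ℕ):ℤ)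
            = - T.coeff ((M+1:ℕ):ℤ) := by
          rw [conv_coeff g T _ hprev, hg0]
          ring
        have hexp : ((HahnSeries.ofPowerSeries ℤ K g) * T).coeff ((M+1:ℕ):ℤ)
            = PowerSeries.coeff (M+2) g + (-(v (M+1) / ((M+1:ℕ):K))) := by
          rw [hTdef, mul_add, mul_sub, Finset.mul_sum,
            HahnSeries.coeff_add, HahnSeries.coeff_sub, coeff_sum']
          have hA : ((HahnSeries.ofPowerSeries ℤ K g)
                * HahnSeries.single (-1:ℤ) (1:K)).coeff ((M+1:ℕ):ℤ)
              = PowerSeries.coeff (M+2) g := by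
            rw [mul_comm]
            exact shift_coeff _ _ _ _ (by push_cast; ring)
          have hB : ((HahnSeries.ofPowerSeries ℤ K g) * k).coeff ((M+1:ℕ):ℤ) = 0 := by
            have h7 : (HahnSeries.ofPowerSeries ℤ K g) * k
                = HahnSeries.single (-1:ℤ) (1:K) * HahnSeries.ofPowerSeries ℤ K (u * g) := by
              rw [hk, map_mul]; ring
            rw [h7, shift_coeff _ (M+2) _ _ (by push_cast; ring), F2]
          have hC : ∑ α ∈ Finset.Icc 1 (r-1),
              ((HahnSeries.ofPowerSeries ℤ K g)
                * (HahnSeries.C (v α / (α:K)) * k ^ (-(α:ℤ)))).coeff ((M+1:ℕ):ℤ)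
              = -(v (M+1) / ((M+1:ℕ):K)) := by
            have hterm : ∀ α : ℕ, (HahnSeries.ofPowerSeries ℤ K g)
                  * (HahnSeries.C (v α / (α:K)) * k ^ (-(α:ℤ)))
                = HahnSeries.C (v α / (α:K))
                  * (HahnSeries.single (α:ℤ) 1 * HahnSeries.ofPowerSeries ℤ K (U^α * g)) := by
              intro α
              rw [hkinvpow, map_mul]
              ring
            rw [Finset.sum_eq_single (M+1)]
            · rw [hterm, HahnSeries.C_apply, HahnSeries.coeff_single_zero_mul,
                shift_coeff _ 0 _ _ (by push_cast; ring), F3b]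
              ring
            · intro α hα hne
              rw [Finset.mem_Icc] at hα
              rw [hterm, HahnSeries.C_apply, HahnSeries.coeff_single_zero_mul]
              rcases lt_or_ge (M+1) α with hgt | hle
              · rw [shift_coeff_neg _ _ (by exact_mod_cast hgt), mul_zero]
              · have hαM : α ≤ M := by omega
                rw [shift_coeff _ (M+1-α) _ _
                    (by push_cast [Nat.cast_sub (by omega : α ≤ M+1)]; ring),
                  F3a α hα.1 hαM, mul_zero]
            · intro hnotin
              exfalso
              apply hnotin
              rw [Finset.mem_Icc]
              omega
          rw [hA, hB, hC]
          ring
        have hgco : PowerSeries.coeff (M+2) g = v (M+1) / ((M+1:ℕ):K) := by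
          rw [eq_div_iff (by exact_mod_cast (by omega : M+1 ≠ 0)), hv' (M+1),
            show M+1+1 = M+2 by omega]
          push_cast
          linear_combination F1
        rw [hexp, hgco] at hconv
        have h9 : - T.coeff ((M+1:ℕ):ℤ) = 0 := by
          rw [← hconv]
          ring
        exact neg_eq_zero.mp h9
  intro n hn
  rcases lt_or_ge n (-1) with h | h
  · exact hlow n h
  · have hn' : n = (((n+1).toNat : ℕ):ℤ) - 1 := by omega
    rw [hn']
    exact key (n+1).toNat (by omega)
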